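/- Let f : C → D be a functor between small categories, and let f_! : Psh(C) → Psh(D) be the induced colimit-preserving functor on presheaf categories (left Kan extension along f composed with Yoneda). Then f_! is an equivalence of categories if and only if f is fully faithful and every object of D is a retract of an object in the essential image of f. -/

import Mathlib

open CategoryTheory

universe u

open Opposite Limits

section Aux
variable {C D : Type u} [SmallCategory C] [SmallCategory D]

lemma key_comm (f : C ⥤ D) (hf : f.Full) {Q Q' : Dᵒᵖ ⥤ Type u} (γ : f.op ⋙ Q ⟶ f.op ⋙ Q')
    {c c' : C} (h : f.obj c ⟶ f.obj c') (x : Q.obj (op (f.obj c'))) :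
    γ.app (op c) (Q.map h.op x) = Q'.map h.op (γ.app (op c') x) := by
  obtain ⟨h₀, rfl⟩ := hf.map_surjective h
  exact FunctorToTypes.naturality γ h₀.op x

lemma restriction_faithful (f : C ⥤ D)
    (hd : ∀ d : D, ∃ (c : C) (s : d ⟶ f.obj c) (r : f.obj c ⟶ d), s ≫ r = 𝟙 d) :
    ((Functor.whiskeringLeft Cᵒᵖ Dᵒᵖ (Type u)).obj f.op).Faithful := by
  constructor
  intro Q Q' α β hαβ
  ext X x
  obtain ⟨c, s, r, hsr⟩ := hd X.unop
  have hx : x = Q.map s.op (Q.map r.op x) := by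
    rw [← FunctorToTypes.map_comp_apply, ← op_comp, hsr]
    simp
  have h1 : ∀ (τ : Q ⟶ Q') (y : Q.obj (op (f.obj c))),
      τ.app X (Q.map s.op y) = Q'.map s.op (τ.app (op (f.obj c)) y) := by
    intro τ y
    have := ConcreteCategory.congr_hom (τ.naturality (s.op : op (f.obj c) ⟶ op X.unop)) y
    simpa using this
  have hX : (op X.unop : Dᵒᵖ) = X := by simp
  rw [show x = Q.map s.op (Q.map r.op x) from hx]
  rw [← hX] at *
  change α.app _ _ = β.app _ _
  rw [h1 α, h1 β]
  have := ConcreteCategory.congr_hom (congrArg (fun (τ : f.op ⋙ Q ⟶ f.op ⋙ Q') => τ.app (op c)) hαβ) (Q.map r.op x)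
  simp only at this
  exact congrArg _ this

lemma restriction_full (f : C ⥤ D) (hf : f.Full)
    (hd : ∀ d : D, ∃ (c : C) (s : d ⟶ f.obj c) (r : f.obj c ⟶ d), s ≫ r = 𝟙 d) :
    ((Functor.whiskeringLeft Cᵒᵖ Dᵒᵖ (Type u)).obj f.op).Full := by
  choose c s r hsr using hd
  constructor
  intro Q Q' γ
  refine ⟨⟨fun X => TypeCat.ofHom (fun x =>
      Q'.map (s X.unop).op (γ.app (op (c X.unop)) (Q.map (r X.unop).op x))), ?_⟩, ?_⟩
  · intro X X' u
    ext x
    dsimp only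
    set d := X.unop
    set d' := X'.unop
    set u₀ : d' ⟶ d := u.unop with hu₀
    have hu : u = u₀.op := rfl
    set h : f.obj (c d') ⟶ f.obj (c d) := r d' ≫ u₀ ≫ s d with hh
    have h1 : u₀ ≫ s d = s d' ≫ h := by
      rw [hh, ← Category.assoc, ← Category.assoc, hsr d', Category.id_comp]
    have h2 : h ≫ r d = r d' ≫ u₀ := by
      rw [hh]
      slice_lhs 3 4 => rw [hsr d]
      simp
    rw [hu]
    calc Q'.map (s d').op (γ.app (op (c d')) (Q.map (r d').op (Q.map u₀.op x)))
        = Q'.map (s d').op (γ.app (op (c d')) (Q.map ((r d' ≫ u₀)).op x)) := by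
          rw [← FunctorToTypes.map_comp_apply, ← op_comp]
      _ = Q'.map (s d').op (γ.app (op (c d')) (Q.map ((h ≫ r d)).op x)) := by rw [h2]
      _ = Q'.map (s d').op (γ.app (op (c d')) (Q.map h.op (Q.map (r d).op x))) := by
          rw [← FunctorToTypes.map_comp_apply, ← op_comp]
      _ = Q'.map (s d').op (Q'.map h.op (γ.app (op (c d)) (Q.map (r d).op x))) := by
          rw [key_comm f hf γ h]
      _ = Q'.map ((s d' ≫ h).op) (γ.app (op (c d)) (Q.map (r d).op x)) := by
          rw [← FunctorToTypes.map_comp_apply, ← op_comp]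
      _ = Q'.map ((u₀ ≫ s d).op) (γ.app (op (c d)) (Q.map (r d).op x)) := by rw [h1]
      _ = Q'.map u₀.op (Q'.map (s d).op (γ.app (op (c d)) (Q.map (r d).op x))) := by
          rw [← FunctorToTypes.map_comp_apply, ← op_comp]
  · ext X x
    dsimp only [Functor.whiskerLeft_app]
    set d := f.obj X.unop with hd
    obtain ⟨s₀, hs₀⟩ := hf.map_surjective (s d : f.obj X.unop ⟶ f.obj (c d))
    calc Q'.map (s d).op (γ.app (op (c d)) (Q.map (r d).op x))
        = γ.app (op X.unop) (Q.map (s d).op (Q.map (r d).op x)) := by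
          rw [key_comm f hf γ (s d)]
      _ = γ.app (op X.unop) (Q.map ((s d ≫ r d)).op x) := by
          rw [← FunctorToTypes.map_comp_apply, ← op_comp]
      _ = γ.app (op X.unop) x := by rw [hsr d]; simp
      _ = γ.app X x := rfl

noncomputable def compYonedaIsoULiftYonedaCompLan (f : C ⥤ D) :
    f ⋙ yoneda ≅ uliftYoneda.{u} ⋙ f.op.lan :=
  Functor.isoWhiskerLeft f uliftYonedaIsoYoneda.{u}.symm ≪≫
    Presheaf.compULiftYonedaIsoULiftYonedaCompLan.{u} f

end Aux

/-- For a functor `f : C ⥤ D` between small categories, the induced colimit-preserving functor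
`f_! : Psh(C) ⥤ Psh(D)` (left Kan extension along `f.op`) is an equivalence iff `f` is fully
faithful and every object of `D` is a retract of an object in the essential image of `f`. -/
theorem lan_isEquivalence_iff {C D : Type u} [SmallCategory C] [SmallCategory D] (f : C ⥤ D) :
    (f.op.lan : (Cᵒᵖ ⥤ Type u) ⥤ (Dᵒᵖ ⥤ Type u)).IsEquivalence ↔
      (f.Full ∧ f.Faithful ∧
        ∀ d : D, ∃ (c : C) (s : d ⟶ f.obj c) (r : f.obj c ⟶ d), s ≫ r = 𝟙 d) := by
  constructor
  · intro hL
    haveI := hL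
    have e := (compYonedaIsoULiftYonedaCompLan f).symm
    haveI : (f ⋙ yoneda).Full := Functor.Full.of_iso e
    haveI : (f ⋙ yoneda).Faithful := Functor.Faithful.of_iso e
    refine ⟨Functor.Full.of_comp_faithful f yoneda, Functor.Faithful.of_comp f yoneda, ?_⟩
    intro d
    haveI : Limits.PreservesColimitsOfSize.{u, u}
        (f.op.lan : (Cᵒᵖ ⥤ Type u) ⥤ (Dᵒᵖ ⥤ Type u)) :=
      (f.op.lanAdjunction (Type u)).leftAdjoint_preservesColimits
    set L : (Cᵒᵖ ⥤ Type u) ⥤ (Dᵒᵖ ⥤ Type u) := f.op.lan with hLdef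
    let P : Cᵒᵖ ⥤ Type u := L.objPreimage (yoneda.obj d)
    let e2 : L.obj P ≅ yoneda.obj d := L.objObjPreimageIso (yoneda.obj d)
    have hc2 : IsColimit (L.mapCocone (Presheaf.coconeOfRepresentable P)) :=
      isColimitOfPreserves L (Presheaf.colimitOfRepresentable P)
    have hc3 : IsColimit (((evaluation Dᵒᵖ (Type u)).obj (op d)).mapCocone
        (L.mapCocone (Presheaf.coconeOfRepresentable P))) :=
      isColimitOfPreserves _ hc2
    obtain ⟨j, y, hy⟩ := Types.jointly_surjective _ hc3 (e2.inv.app (op d) (𝟙 d))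
    let c₁ : C := j.unop.1.unop
    let ψ : yoneda.obj (f.obj c₁) ≅ L.obj (uliftYoneda.{u}.obj c₁) :=
      (compYonedaIsoULiftYonedaCompLan f).app c₁
    let y' : (L.obj (uliftYoneda.{u}.obj c₁)).obj (op d) := y
    let g : yoneda.obj (f.obj c₁) ⟶ yoneda.obj d :=
      ψ.hom ≫ L.map ((Presheaf.coconeOfRepresentable P).ι.app j) ≫ e2.hom
    refine ⟨c₁, ψ.inv.app (op d) y', g.app (op (f.obj c₁)) (𝟙 _), ?_⟩
    have h1 : g.app (op d) (ψ.inv.app (op d) y') =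
        (ψ.inv.app (op d) y') ≫ g.app (op (f.obj c₁)) (𝟙 _) := by
      have := ConcreteCategory.congr_hom (g.naturality (ψ.inv.app (op d) y').op) (𝟙 (f.obj c₁))
      simpa using this
    have hψ : ψ.hom.app (op d) (ψ.inv.app (op d) y') = y' := by
      have := ConcreteCategory.congr_hom (ψ.inv_hom_id_app (op d)) y'
      simpa using this
    have h2 : g.app (op d) (ψ.inv.app (op d) y') = 𝟙 d := by
      show (e2.hom.app (op d)) ((L.map ((Presheaf.coconeOfRepresentable P).ι.app j)).app (op d)
        (ψ.hom.app (op d) (ψ.inv.app (op d) y'))) = 𝟙 d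
      rw [hψ]
      have hy' : (L.map ((Presheaf.coconeOfRepresentable P).ι.app j)).app (op d) y' =
          e2.inv.app (op d) (𝟙 d) := hy
      rw [hy']
      have := ConcreteCategory.congr_hom (e2.inv_hom_id_app (op d)) (𝟙 d)
      simpa using this
    rw [← h1, h2]
  · rintro ⟨hfull, hfaith, hd⟩
    haveI := hfull; haveI := hfaith
    haveI := restriction_full f hfull hd
    haveI := restriction_faithful f hd
    haveI : IsIso (f.op.lanAdjunction (Type u)).unit := inferInstance
    haveI : IsIso (f.op.lanAdjunction (Type u)).counit := inferInstance
    haveI : ∀ X, IsIso ((f.op.lanAdjunction (Type u)).unit.app X) := fun _ => inferInstance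
    haveI : ∀ Y, IsIso ((f.op.lanAdjunction (Type u)).counit.app Y) := fun _ => inferInstance
    exact (f.op.lanAdjunction (Type u)).toEquivalence.isEquivalence_functor
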